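/- Every 7×7 real matrix α in the infinitesimal stabilizer of Φ₀, i.e. satisfying Φ₀(αu, v, w) + Φ₀(u, αv, w) + Φ₀(u, v, αw) = 0 for all u, v, w ∈ ℝ⁷, is skew-symmetric: αᵀ = −α. -/
import Mathlib


noncomputable section

/-- `tri i j k` is the 3-form `dxᵢ ∧ dxⱼ ∧ dxₖ` on `ℝ⁷` (0-based indices). -/
def tri (i j k : Fin 7) (u v w : Fin 7 → ℝ) : ℝ :=
  u i * (v j * w k - v k * w j) - u j * (v i * w k - v k * w i)
    + u k * (v i * w j - v j * w i)

/-- The standard `G₂` three-form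
`Φ₀ = dx₁₂₃ + dx₁₄₅ + dx₁₆₇ + dx₂₄₆ − dx₂₅₇ − dx₃₄₇ − dx₃₅₆` (written here
with 0-based indices). -/
def phi0 (u v w : Fin 7 → ℝ) : ℝ :=
  tri 0 1 2 u v w + tri 0 3 4 u v w + tri 0 5 6 u v w + tri 1 3 5 u v w
    - tri 1 4 6 u v w - tri 2 3 6 u v w - tri 2 4 5 u v w

/-- The standard Euclidean inner product on `ℝ⁷`. -/
def ip (u v : Fin 7 → ℝ) : ℝ := ∑ i, u i * v i

/-- Components `(Φ₀)_{abc} = Φ₀(e_a, e_b, e_c)` of the three-form `Φ₀`. -/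
def phi0c (a b c : Fin 7) : ℝ :=
  phi0 (Pi.single a 1) (Pi.single b 1) (Pi.single c 1)

/-- The contraction map `f_{Φ₀} : v ↦ v ⌟ Φ₀`, `(f_{Φ₀}(v))_{ab} = Φ₀(v, e_a, e_b)`. -/
def fmat (v : Fin 7 → ℝ) : Matrix (Fin 7) (Fin 7) ℝ :=
  Matrix.of fun a b => phi0 v (Pi.single a 1) (Pi.single b 1)

/-- The cross product on `ℝ⁷` determined by `⟨u × v, w⟩ = Φ₀(u, v, w)`. -/
def cross7 (u v : Fin 7 → ℝ) : Fin 7 → ℝ := fun a => phi0 u v (Pi.single a 1)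

set_option maxHeartbeats 1000000 in
/-- every matrix in the infinitesimal stabilizer of `Φ₀` is
skew-symmetric. -/
theorem stmt4 (α : Matrix (Fin 7) (Fin 7) ℝ)
    (h : ∀ u v w, phi0 (α.mulVec u) v w + phi0 u (α.mulVec v) w
      + phi0 u v (α.mulVec w) = 0) :
    α.transpose = -α := by
  have E012 := h (Pi.single 0 1) (Pi.single 1 1) (Pi.single 2 1)
  have E013 := h (Pi.single 0 1) (Pi.single 1 1) (Pi.single 3 1)
  have E014 := h (Pi.single 0 1) (Pi.single 1 1) (Pi.single 4 1)
  have E015 := h (Pi.single 0 1) (Pi.single 1 1) (Pi.single 5 1)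
  have E016 := h (Pi.single 0 1) (Pi.single 1 1) (Pi.single 6 1)
  have E023 := h (Pi.single 0 1) (Pi.single 2 1) (Pi.single 3 1)
  have E024 := h (Pi.single 0 1) (Pi.single 2 1) (Pi.single 4 1)
  have E025 := h (Pi.single 0 1) (Pi.single 2 1) (Pi.single 5 1)
  have E026 := h (Pi.single 0 1) (Pi.single 2 1) (Pi.single 6 1)
  have E034 := h (Pi.single 0 1) (Pi.single 3 1) (Pi.single 4 1)
  have E035 := h (Pi.single 0 1) (Pi.single 3 1) (Pi.single 5 1)
  have E036 := h (Pi.single 0 1) (Pi.single 3 1) (Pi.single 6 1)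
  have E045 := h (Pi.single 0 1) (Pi.single 4 1) (Pi.single 5 1)
  have E046 := h (Pi.single 0 1) (Pi.single 4 1) (Pi.single 6 1)
  have E056 := h (Pi.single 0 1) (Pi.single 5 1) (Pi.single 6 1)
  have E123 := h (Pi.single 1 1) (Pi.single 2 1) (Pi.single 3 1)
  have E124 := h (Pi.single 1 1) (Pi.single 2 1) (Pi.single 4 1)
  have E125 := h (Pi.single 1 1) (Pi.single 2 1) (Pi.single 5 1)
  have E126 := h (Pi.single 1 1) (Pi.single 2 1) (Pi.single 6 1)
  have E134 := h (Pi.single 1 1) (Pi.single 3 1) (Pi.single 4 1)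
  have E135 := h (Pi.single 1 1) (Pi.single 3 1) (Pi.single 5 1)
  have E136 := h (Pi.single 1 1) (Pi.single 3 1) (Pi.single 6 1)
  have E145 := h (Pi.single 1 1) (Pi.single 4 1) (Pi.single 5 1)
  have E146 := h (Pi.single 1 1) (Pi.single 4 1) (Pi.single 6 1)
  have E156 := h (Pi.single 1 1) (Pi.single 5 1) (Pi.single 6 1)
  have E234 := h (Pi.single 2 1) (Pi.single 3 1) (Pi.single 4 1)
  have E235 := h (Pi.single 2 1) (Pi.single 3 1) (Pi.single 5 1)
  have E236 := h (Pi.single 2 1) (Pi.single 3 1) (Pi.single 6 1)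
  have E245 := h (Pi.single 2 1) (Pi.single 4 1) (Pi.single 5 1)
  have E246 := h (Pi.single 2 1) (Pi.single 4 1) (Pi.single 6 1)
  have E256 := h (Pi.single 2 1) (Pi.single 5 1) (Pi.single 6 1)
  have E345 := h (Pi.single 3 1) (Pi.single 4 1) (Pi.single 5 1)
  have E346 := h (Pi.single 3 1) (Pi.single 4 1) (Pi.single 6 1)
  have E356 := h (Pi.single 3 1) (Pi.single 5 1) (Pi.single 6 1)
  have E456 := h (Pi.single 4 1) (Pi.single 5 1) (Pi.single 6 1)
  simp [phi0, tri, Matrix.mulVec_single, Pi.single_apply] at E012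
  simp [phi0, tri, Matrix.mulVec_single, Pi.single_apply] at E013
  simp [phi0, tri, Matrix.mulVec_single, Pi.single_apply] at E014
  simp [phi0, tri, Matrix.mulVec_single, Pi.single_apply] at E015
  simp [phi0, tri, Matrix.mulVec_single, Pi.single_apply] at E016
  simp [phi0, tri, Matrix.mulVec_single, Pi.single_apply] at E023
  simp [phi0, tri, Matrix.mulVec_single, Pi.single_apply] at E024
  simp [phi0, tri, Matrix.mulVec_single, Pi.single_apply] at E025
  simp [phi0, tri, Matrix.mulVec_single, Pi.single_apply] at E026
  simp [phi0, tri, Matrix.mulVec_single, Pi.single_apply] at E034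
  simp [phi0, tri, Matrix.mulVec_single, Pi.single_apply] at E035
  simp [phi0, tri, Matrix.mulVec_single, Pi.single_apply] at E036
  simp [phi0, tri, Matrix.mulVec_single, Pi.single_apply] at E045
  simp [phi0, tri, Matrix.mulVec_single, Pi.single_apply] at E046
  simp [phi0, tri, Matrix.mulVec_single, Pi.single_apply] at E056
  simp [phi0, tri, Matrix.mulVec_single, Pi.single_apply] at E123
  simp [phi0, tri, Matrix.mulVec_single, Pi.single_apply] at E124
  simp [phi0, tri, Matrix.mulVec_single, Pi.single_apply] at E125
  simp [phi0, tri, Matrix.mulVec_single, Pi.single_apply] at E126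
  simp [phi0, tri, Matrix.mulVec_single, Pi.single_apply] at E134
  simp [phi0, tri, Matrix.mulVec_single, Pi.single_apply] at E135
  simp [phi0, tri, Matrix.mulVec_single, Pi.single_apply] at E136
  simp [phi0, tri, Matrix.mulVec_single, Pi.single_apply] at E145
  simp [phi0, tri, Matrix.mulVec_single, Pi.single_apply] at E146
  simp [phi0, tri, Matrix.mulVec_single, Pi.single_apply] at E156
  simp [phi0, tri, Matrix.mulVec_single, Pi.single_apply] at E234
  simp [phi0, tri, Matrix.mulVec_single, Pi.single_apply] at E235
  simp [phi0, tri, Matrix.mulVec_single, Pi.single_apply] at E236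
  simp [phi0, tri, Matrix.mulVec_single, Pi.single_apply] at E245
  simp [phi0, tri, Matrix.mulVec_single, Pi.single_apply] at E246
  simp [phi0, tri, Matrix.mulVec_single, Pi.single_apply] at E256
  simp [phi0, tri, Matrix.mulVec_single, Pi.single_apply] at E345
  simp [phi0, tri, Matrix.mulVec_single, Pi.single_apply] at E346
  simp [phi0, tri, Matrix.mulVec_single, Pi.single_apply] at E356
  simp [phi0, tri, Matrix.mulVec_single, Pi.single_apply] at E456
  ext i j
  fin_cases i <;> fin_cases j
  · show α 0 0 = -(α 0 0)
    linarith [E012, E034, E056, E135, E146, E236, E245]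
  · show α 1 0 = -(α 0 1)
    linarith [E035, E046, E134, E156]
  · show α 2 0 = -(α 0 2)
    linarith [E036, E045, E234, E256]
  · show α 3 0 = -(α 0 3)
    linarith [E015, E026, E123, E356]
  · show α 4 0 = -(α 0 4)
    linarith [E016, E025, E124, E456]
  · show α 5 0 = -(α 0 5)
    linarith [E013, E024, E125, E345]
  · show α 6 0 = -(α 0 6)
    linarith [E014, E023, E126, E346]
  · show α 0 1 = -(α 1 0)
    linarith [E035, E046, E134, E156]
  · show α 1 1 = -(α 1 1)
    linarith [E012, E034, E056, E135, E146, E236, E245]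
  · show α 2 1 = -(α 1 2)
    linarith [E136, E145, E235, E246]
  · show α 3 1 = -(α 1 3)
    linarith [E014, E023, E126, E346]
  · show α 4 1 = -(α 1 4)
    linarith [E013, E024, E125, E345]
  · show α 5 1 = -(α 1 5)
    linarith [E016, E025, E124, E456]
  · show α 6 1 = -(α 1 6)
    linarith [E015, E026, E123, E356]
  · show α 0 2 = -(α 2 0)
    linarith [E036, E045, E234, E256]
  · show α 1 2 = -(α 2 1)
    linarith [E136, E145, E235, E246]
  · show α 2 2 = -(α 2 2)
    linarith [E012, E034, E056, E135, E146, E236, E245]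
  · show α 3 2 = -(α 2 3)
    linarith [E013, E024, E125, E345]
  · show α 4 2 = -(α 2 4)
    linarith [E014, E023, E126, E346]
  · show α 5 2 = -(α 2 5)
    linarith [E015, E026, E123, E356]
  · show α 6 2 = -(α 2 6)
    linarith [E016, E025, E124, E456]
  · show α 0 3 = -(α 3 0)
    linarith [E015, E026, E123, E356]
  · show α 1 3 = -(α 3 1)
    linarith [E014, E023, E126, E346]
  · show α 2 3 = -(α 3 2)
    linarith [E013, E024, E125, E345]
  · show α 3 3 = -(α 3 3)
    linarith [E012, E034, E056, E135, E146, E236, E245]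
  · show α 4 3 = -(α 3 4)
    linarith [E136, E145, E235, E246]
  · show α 5 3 = -(α 3 5)
    linarith [E036, E045, E234, E256]
  · show α 6 3 = -(α 3 6)
    linarith [E035, E046, E134, E156]
  · show α 0 4 = -(α 4 0)
    linarith [E016, E025, E124, E456]
  · show α 1 4 = -(α 4 1)
    linarith [E013, E024, E125, E345]
  · show α 2 4 = -(α 4 2)
    linarith [E014, E023, E126, E346]
  · show α 3 4 = -(α 4 3)
    linarith [E136, E145, E235, E246]
  · show α 4 4 = -(α 4 4)
    linarith [E012, E034, E056, E135, E146, E236, E245]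
  · show α 5 4 = -(α 4 5)
    linarith [E035, E046, E134, E156]
  · show α 6 4 = -(α 4 6)
    linarith [E036, E045, E234, E256]
  · show α 0 5 = -(α 5 0)
    linarith [E013, E024, E125, E345]
  · show α 1 5 = -(α 5 1)
    linarith [E016, E025, E124, E456]
  · show α 2 5 = -(α 5 2)
    linarith [E015, E026, E123, E356]
  · show α 3 5 = -(α 5 3)
    linarith [E036, E045, E234, E256]
  · show α 4 5 = -(α 5 4)
    linarith [E035, E046, E134, E156]
  · show α 5 5 = -(α 5 5)
    linarith [E012, E034, E056, E135, E146, E236, E245]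
  · show α 6 5 = -(α 5 6)
    linarith [E136, E145, E235, E246]
  · show α 0 6 = -(α 6 0)
    linarith [E014, E023, E126, E346]
  · show α 1 6 = -(α 6 1)
    linarith [E015, E026, E123, E356]
  · show α 2 6 = -(α 6 2)
    linarith [E016, E025, E124, E456]
  · show α 3 6 = -(α 6 3)
    linarith [E035, E046, E134, E156]
  · show α 4 6 = -(α 6 4)
    linarith [E036, E045, E234, E256]
  · show α 5 6 = -(α 6 5)
    linarith [E136, E145, E235, E246]
  · show α 6 6 = -(α 6 6)
    linarith [E012, E034, E056, E135, E146, E236, E245]
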